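/- Consider the random environment 𝐏^expl on ℤ^d, d ≥ 2, with parameter ε ∈ (1/(2d+1), 1/2]. Then for every x ∈ 𝔥, Q^𝔥_x ≥ ε/d holds 𝐏^expl-a.s.; consequently 𝐄[(Q^𝔥_x)^{−γ}] < ∞ for every γ > 0 and every x ∈ 𝔥, and 𝐏^expl satisfies condition (K)_α for every α > 0. Moreover 𝐏^expl satisfies condition (E)_0. -/

import Mathlib

open MeasureTheory ProbabilityTheory Filter Topology ENNReal
open scoped Classical

noncomputable section

namespace RWRE

/-- Sites of `ℤ^d`. -/
abbrev V (d : ℕ) := Fin d → ℤ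

/-- The `2d` directions: `(i, true)` is `e_i`, `(i, false)` is `-e_i`. -/
abbrev Dir (d : ℕ) := Fin d × Bool

/-- Trajectory space. -/
abbrev Traj (d : ℕ) := ℕ → V d

/-- The unit vector associated to a direction. -/
def dirVec (d : ℕ) (e : Dir d) : V d := fun i => if i = e.1 then (if e.2 then 1 else -1) else 0

/-- Probability vectors on the set of directions. -/
abbrev ProbVec (d : ℕ) := {p : Dir d → ℝ // (∀ e, 0 ≤ p e) ∧ ∑ e, p e = 1}

/-- Environments. -/
abbrev Env (d : ℕ) := V d → ProbVec d

/-- Transition probability at site `x` in direction `e`. -/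
def pmf {d : ℕ} (ω : Env d) (x : V d) (e : Dir d) : ℝ := (ω x).1 e

/-- Transition probability from `x` to `y` (zero if `y` is not a neighbour of `x`). -/
def stepProb {d : ℕ} (ω : Env d) (x y : V d) : ℝ :=
  ∑ e : Dir d, if y = x + dirVec d e then pmf ω x e else 0

/-- `P` is the family of quenched laws: `P ω x` is the law of the Markov chain started at `x`
with transition probabilities given by `ω`. -/
def IsQuenched {d : ℕ} (P : Env d → V d → Measure (Traj d)) : Prop :=
  (∀ ω x, IsProbabilityMeasure (P ω x)) ∧
  (∀ x, Measurable fun ω => P ω x) ∧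
  ∀ ω x (n : ℕ) (γ : ℕ → V d),
    (P ω x {X | ∀ k ≤ n, X k = γ k}).toReal
      = (if γ 0 = x then 1 else 0) * ∏ k ∈ Finset.range n, stepProb ω (γ k) (γ (k + 1))

/-- The annealed law `ℙ_x`. -/
def annealed {d : ℕ} (P : Env d → V d → Measure (Traj d)) (Pr : Measure (Env d)) (x : V d) :
    Measure (Traj d) := Pr.bind fun ω => P ω x

/-- The environment law is i.i.d. -/
def IsIID {d : ℕ} (Pr : Measure (Env d)) : Prop :=
  IsProbabilityMeasure Pr ∧
  iIndepFun (fun x ω => ω x) Pr ∧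
  ∀ x : V d, Pr.map (fun ω => ω x) = Pr.map (fun ω => ω 0)

/-- Ellipticity. -/
def Elliptic {d : ℕ} (Pr : Measure (Env d)) : Prop :=
  ∀ᵐ ω ∂Pr, ∀ x e, 0 < pmf ω x e

/-- Exit time of a set. -/
def exitTime {d : ℕ} (A : Set (V d)) (X : Traj d) : ℕ∞ :=
  ⨅ (n : ℕ) (_ : X n ∉ A), (n : ℕ∞)

/-- Hitting time of a set. -/
def hitTime {d : ℕ} (A : Set (V d)) (X : Traj d) : ℕ∞ :=
  ⨅ (n : ℕ) (_ : X n ∈ A), (n : ℕ∞)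

/-- Positive hitting time of a set. -/
def retTime {d : ℕ} (A : Set (V d)) (X : Traj d) : ℕ∞ :=
  ⨅ (n : ℕ) (_ : 1 ≤ n ∧ X n ∈ A), (n : ℕ∞)

/-- Scalar product of `ℓ ∈ ℝ^d` with a site of `ℤ^d`. -/
def dot {d : ℕ} (ℓ : Fin d → ℝ) (x : V d) : ℝ := ∑ i, ℓ i * (x i : ℝ)

/-- `ℓ` belongs to the unit sphere `S^{d-1}`. -/
def UnitVec {d : ℕ} (ℓ : Fin d → ℝ) : Prop := ∑ i, ℓ i ^ 2 = 1

/-- The walk, under the annealed law, is transient in the direction `ℓ`. -/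
def Transient {d : ℕ} (P : Env d → V d → Measure (Traj d)) (Pr : Measure (Env d))
    (ℓ : Fin d → ℝ) : Prop :=
  annealed P Pr 0 {X | Tendsto (fun n => dot ℓ (X n)) atTop atTop} = 1

/-- The trajectory rescaled to `ℝ^d`. -/
def toR {d : ℕ} (x : V d) : Fin d → ℝ := fun i => (x i : ℝ)

/-- The unit hypercube based at `x`. -/
def cube {d : ℕ} (x : V d) : Set (V d) := {y | ∀ i, y i = x i ∨ y i = x i + 1}

/-- The corners of the unit hypercube based at `0`, as a finite set. -/
def cubePts (d : ℕ) : Finset (V d) :=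
  Finset.univ.image fun s : Fin d → Bool => (fun i => if s i then 1 else 0 : V d)

/-- The (outer) boundary of a set of sites. -/
def bdry {d : ℕ} (A : Set (V d)) : Set (V d) :=
  {z | z ∉ A ∧ ∃ w ∈ A, ∑ i, |z i - w i| = 1}

/-- The boundary points adjacent to `y`. -/
def bdryAt {d : ℕ} (y : V d) (A : Set (V d)) : Set (V d) :=
  {z | z ∈ bdry A ∧ ∑ i, |z i - y i| = 1}

/-- `Q^C_y`: the largest transition probability leading out of `C` from `y`. -/
def Qmax {d : ℕ} (ω : Env d) (C : Set (V d)) (y : V d) : ℝ :=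
  ⨆ e : Dir d, if y + dirVec d e ∈ bdryAt y C then pmf ω y e else 0

/-- The event that the walk exits `C` through a neighbour of `y` before returning to `x`. -/
def exitVia {d : ℕ} (C : Set (V d)) (x y : V d) : Set (Traj d) :=
  {X | ∃ n : ℕ, X n ∈ bdryAt y C ∧ (∀ m < n, X m ∉ bdry C) ∧ ∀ m, 1 ≤ m → m < n → X m ≠ x}

/-- `Q̃^C_{x,y}`: the quenched probability, starting from `x`, of exiting `C` through a
neighbour of `y` before returning to `x`. -/
def Qtilde {d : ℕ} (P : Env d → V d → Measure (Traj d)) (ω : Env d) (C : Set (V d))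
    (x y : V d) : ℝ := ((P ω x) (exitVia C x y)).toReal

/-- A marked Markovian hypercube: a unit hypercube containing `0` discovered in a Markovian
fashion by revealing sites `f 0 = 0, f 1, ...` one at a time, together with marks. -/
structure MMH (d : ℕ) where
  /-- The successively revealed sites. -/
  f : ℕ → Env d → V d
  /-- The marks, indexed by the corners of the unit hypercube at `0`. -/
  mark : V d → Env d → ℝ
  /-- The base point `x₀(ω)` of the revealed hypercube. -/
  x0 : Env d → V d
  f_zero : ∀ ω, f 0 ω = 0
  f_meas : ∀ i, Measurable (f i)
  f_local : ∀ i (ω ω' : Env d), (∀ j ≤ i, ω' (f j ω) = ω (f j ω)) → f (i + 1) ω' = f (i + 1) ω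
  f_adj : ∀ i ω, i + 1 < 2 ^ d → f (i + 1) ω ∈ bdry {y | ∃ j ≤ i, f j ω = y}
  x0_cube : ∀ ω, cube (x0 ω) = {y | ∃ j < 2 ^ d, f j ω = y}
  mark_nonneg : ∀ x ω, 0 ≤ mark x ω
  mark_meas : ∀ x, Measurable (mark x)
  mark_local : ∀ x (ω ω' : Env d), (∀ y ∈ cube (x0 ω), ω' y = ω y) → mark x ω' = mark x ω

/-- Condition `(K)_α` with explicit constant `ε` (parts (1), (2), (3)). -/
def CondKE {d : ℕ} (P : Env d → V d → Measure (Traj d)) (Pr : Measure (Env d))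
    (α ε : ℝ) : Prop :=
  ∃ γ : V d → ℝ, (∀ x, 0 ≤ γ x) ∧
    (∀ x ∈ cubePts d, ∫⁻ ω, (ENNReal.ofReal (Qmax ω (cube 0) x)) ^ (-(γ x)) ∂Pr < ⊤) ∧
    ∃ H : MMH d,
      (∫⁻ ω, ∏ x ∈ cubePts d,
          (ENNReal.ofReal (Qtilde P ω (cube (H.x0 ω)) 0 (H.x0 ω + x))) ^ (-(H.mark x ω)) ∂Pr
        < ⊤) ∧
      ∀ᵐ ω ∂Pr, α + ε ≤ ∑ x ∈ cubePts d, min (γ x) (H.mark x ω)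

/-- Condition `(K)_α`. -/
def CondK {d : ℕ} (P : Env d → V d → Measure (Traj d)) (Pr : Measure (Env d)) (α : ℝ) : Prop :=
  ∃ ε > (0 : ℝ), CondKE P Pr α ε

/-- Condition `(E)_0`. -/
def CondE0 {d : ℕ} (Pr : Measure (Env d)) : Prop :=
  ∀ e : Dir d, ∃ η > (0 : ℝ), ∫⁻ ω, (ENNReal.ofReal (pmf ω 0 e)) ^ (-η) ∂Pr < ⊤

/-- The coordinates of `z ∈ ℤ^d` in the rotated frame `R`. -/
def tiltCoord {d : ℕ} (R : EuclideanSpace ℝ (Fin d) ≃ₗᵢ[ℝ] EuclideanSpace ℝ (Fin d))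
    (z : V d) : Fin d → ℝ :=
  WithLp.equiv 2 (Fin d → ℝ) (R.symm ((WithLp.equiv 2 (Fin d → ℝ)).symm fun j => (z j : ℝ)))

/-- The box `B^ℓ_{L,L',L̃}`: the image under the rotation `R` of
`(-L',L) × (-L̃,L̃)^{d-1}`, intersected with `ℤ^d`. -/
def polyBox {d : ℕ} (R : EuclideanSpace ℝ (Fin d) ≃ₗᵢ[ℝ] EuclideanSpace ℝ (Fin d))
    (L L' Lt : ℝ) : Set (V d) :=
  {z | (∀ i : Fin d, (i : ℕ) = 0 → tiltCoord R z i ∈ Set.Ioo (-L') L) ∧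
       ∀ i : Fin d, (i : ℕ) ≠ 0 → tiltCoord R z i ∈ Set.Ioo (-Lt) Lt}

/-- The first coordinate vector of `ℝ^d` as an element of Euclidean space. -/
def euc1 (d : ℕ) : EuclideanSpace ℝ (Fin d) :=
  (WithLp.equiv 2 (Fin d → ℝ)).symm fun i => if (i : ℕ) = 0 then 1 else 0

/-- The polynomial condition `(P)^ℓ_M`. -/
def CondP {d : ℕ} (P : Env d → V d → Measure (Traj d)) (Pr : Measure (Env d))
    (ℓ : Fin d → ℝ) (M : ℝ) : Prop :=
  ∃ R : EuclideanSpace ℝ (Fin d) ≃ₗᵢ[ℝ] EuclideanSpace ℝ (Fin d),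
    R (euc1 d) = (WithLp.equiv 2 (Fin d → ℝ)).symm ℓ ∧
    ∀ L : ℝ, 2 / 3 * 3 ^ (29 * d) ≤ L →
      ∃ L' ≤ 5 / 4 * L, ∃ Lt ≤ 72 * L ^ 3,
        annealed P Pr 0
          {X | ∃ n, X n ∉ polyBox R L L' Lt ∧ (∀ m < n, X m ∈ polyBox R L L' Lt) ∧
                dot ℓ (X n) < L}
          ≤ ENNReal.ofReal (L ^ (-M))

/-- The backtracking time `D = inf{n ≥ 0 : X_n·ℓ < X_0·ℓ}`. -/
def Dtime {d : ℕ} (ℓ : Fin d → ℝ) (X : Traj d) : ℕ∞ :=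
  ⨅ (n : ℕ) (_ : dot ℓ (X n) < dot ℓ (X 0)), (n : ℕ∞)

/-- The triples `(S_k, R_k, M_k)` of the regeneration structure. -/
def regenAux {d : ℕ} (ℓ : Fin d → ℝ) (a : ℝ) (X : Traj d) : ℕ → ℕ∞ × ℕ∞ × EReal
  | 0 => (0, 0, ((dot ℓ (X 0) : ℝ) : EReal))
  | k + 1 =>
    let M := (regenAux ℓ a X k).2.2
    let S : ℕ∞ := ⨅ (n : ℕ) (_ : M + (a : EReal) < ((dot ℓ (X n) : ℝ) : EReal)), (n : ℕ∞)
    let R : ℕ∞ := ⨅ (n : ℕ) (_ : (n : ℕ∞) = S), (S + Dtime ℓ fun m => X (n + m))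
    (S, R, ⨆ (n : ℕ) (_ : (n : ℕ∞) ≤ R), ((dot ℓ (X n) : ℝ) : EReal))

/-- The first regeneration time `τ₁ = S_K`. -/
def tau1 {d : ℕ} (ℓ : Fin d → ℝ) (a : ℝ) (X : Traj d) : ℕ∞ :=
  ⨅ (k : ℕ) (_ : 1 ≤ k ∧ (regenAux ℓ a X k).1 ≠ ⊤ ∧ (regenAux ℓ a X k).2.1 = ⊤),
    (regenAux ℓ a X k).1

/-- The `ℓ¹` norm on `ℤ^d`. -/
def norm1 {d : ℕ} (x : V d) : ℤ := ∑ i, |x i|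

/-- `ℙ`-expectation, under the annealed law started at `x`, of `(T^ex_𝔥)^α`. -/
def cubeExitMoment {d : ℕ} (P : Env d → V d → Measure (Traj d)) (Pr : Measure (Env d))
    (x : V d) (α : ℝ) : ℝ≥0∞ :=
  ∫⁻ X, ((exitTime (cube 0) X : ℝ≥0∞)) ^ α ∂(annealed P Pr x)

/-- The uniform probability measure on the set of directions. -/
def uniformDir (d : ℕ) : Measure (Dir d) :=
  ((Fintype.card (Dir d) : ℝ≥0∞))⁻¹ • ∑ e : Dir d, Measure.dirac e

/-- The transition vector of the example environment `𝐏^expl` with strength `ε`, as a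
function of the variables `(T, i₀)`: direction `i₀` gets probability `1/T`, the remaining
"positive" directions share `1 - ε` (minus `1/T` if `i₀` is positive), and the remaining
"negative" directions share `ε` (minus `1/T` if `i₀` is negative). -/
def pexpl (d : ℕ) (ε : ℝ) (ti : ℝ × Dir d) : Dir d → ℝ := fun e =>
  if e = ti.2 then 1 / ti.1
  else if e.2 then
    (1 - ε - (if ti.2.2 then 1 / ti.1 else 0)) / ((d : ℝ) - (if ti.2.2 then 1 else 0))
  else (ε - (if ti.2.2 then 0 else 1 / ti.1)) / ((d : ℝ) - (if ti.2.2 then 0 else 1))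

/-- The law `𝐏` is the i.i.d. environment `𝐏^expl` with parameter `ε`: the common site
marginal is the law of `pexpl (T, i₀)` where `T ≥ 2d+1` a.s. with
`𝐄[T^{1/(4d)}] = ∞`, `𝐄[T^{1/(8d)}] < ∞`, and `i₀` is an independent uniform direction. -/
def IsPexpl {d : ℕ} (Pr : Measure (Env d)) (ε : ℝ) : Prop :=
  IsIID Pr ∧
  ∃ μT : Measure ℝ, IsProbabilityMeasure μT ∧
    μT {t | 2 * (d : ℝ) + 1 ≤ t} = 1 ∧
    (∫⁻ t, ENNReal.ofReal (t ^ ((1 : ℝ) / (4 * d))) ∂μT = ⊤) ∧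
    (∫⁻ t, ENNReal.ofReal (t ^ ((1 : ℝ) / (8 * d))) ∂μT < ⊤) ∧
    Pr.map (fun ω => ((ω 0).1 : Dir d → ℝ)) = (μT.prod (uniformDir d)).map (pexpl d ε)

variable {d : ℕ}

lemma dirVec_injective (d : ℕ) : Function.Injective (dirVec d) := by
  rintro ⟨j, b⟩ ⟨j', b'⟩ h
  have h1 := congrFun h j
  by_cases hj : j = j'
  · subst hj
    simp only [dirVec, if_pos rfl] at h1
    cases b <;> cases b' <;> simp_all <;> omega
  · simp only [dirVec, if_pos rfl, if_neg hj] at h1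
    cases b <;> simp at h1

lemma sum_abs_dirVec (e : Dir d) : ∑ i, |dirVec d e i| = 1 := by
  rw [Finset.sum_eq_single e.1]
  · simp only [dirVec, if_pos rfl]; cases e.2 <;> simp
  · intro i _ hi; simp [dirVec, hi]
  · simp

lemma mem_cube_iff {x y : V d} : y ∈ cube x ↔ ∀ i, y i = x i ∨ y i = x i + 1 := Iff.rfl

lemma aux_cube (x : V d) (hx : x ∈ cube 0) (e : Dir d) :
    x + dirVec d e ∈ bdryAt x (cube 0) ↔ x e.1 = (if e.2 then 1 else 0) := by
  have hx' : ∀ i, x i = 0 ∨ x i = 1 := by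
    intro i; have := hx i; simpa using this
  have hsub : ∀ i, (x + dirVec d e) i - x i = dirVec d e i := by
    intro i; simp [Pi.add_apply]
  have hsum : ∑ i, |(x + dirVec d e) i - x i| = 1 := by
    simp only [hsub]; exact sum_abs_dirVec e
  have hcoord : (x + dirVec d e) e.1 = x e.1 + (if e.2 then 1 else -1) := by
    simp [Pi.add_apply, dirVec]
  constructor
  · rintro ⟨⟨hz, -⟩, -⟩
    by_contra hne
    apply hz
    intro i
    by_cases hi : i = e.1
    · have h0 := hx' i
      subst hi
      simp only [Pi.zero_apply, Pi.add_apply]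
      rcases h0 with h | h <;> cases hb : e.2 <;>
        simp [dirVec, hb, h] at hcoord hne ⊢ <;> omega
    · have : (x + dirVec d e) i = x i := by simp [Pi.add_apply, dirVec, hi]
      rw [this]
      simpa using hx' i
  · intro hc
    refine ⟨⟨?_, x, hx, hsum⟩, hsum⟩
    intro hz
    have h1 := hz e.1
    rw [hcoord] at h1
    simp only [Pi.zero_apply] at h1
    cases hb : e.2 <;> rw [hb] at hc h1 <;> simp at hc h1 <;> omega

section Arith
variable {D ε t : ℝ}

lemma A1 (hD : 2 ≤ D) (ht : 2*D+1 ≤ t) (hε1 : 1/(2*D+1) < ε) (hε2 : ε ≤ 1/2) :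
    ε/D ≤ (1 - ε - 1/t)/(D-1) := by
  have ht0 : (0:ℝ) < t := by linarith
  have hw0 : (0:ℝ) < 2*D+1 := by linarith
  have hwpos : (0:ℝ) < 1/(2*D+1) := by positivity
  have hu : 1/t ≤ 1/(2*D+1) := one_div_le_one_div_of_le hw0 ht
  have hw : 1/(2*D+1) * (2*D+1) = 1 := by field_simp
  have h1 : (1/t)*D ≤ (1/(2*D+1))*D :=
    mul_le_mul_of_nonneg_right hu (by linarith)
  have h2 : ε*(2*D-1) ≤ (1/2)*(2*D-1) :=
    mul_le_mul_of_nonneg_right hε2 (by linarith)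
  rw [div_le_div_iff₀ (by linarith) (by linarith)]
  nlinarith

lemma A3 (hD : 2 ≤ D) (h : 1/t < ε/D) :
    ε/D ≤ (ε - 1/t)/(D-1) := by
  have hD0 : (0:ℝ) < D := by linarith
  have h1 : D * (1/t) < D * (ε/D) := mul_lt_mul_of_pos_left h hD0
  have h2 : D * (ε/D) = ε := by field_simp
  rw [div_le_div_iff₀ hD0 (by linarith)]
  nlinarith

lemma A4 (hD : 2 ≤ D) (ht : 2*D+1 ≤ t) (hε1 : 1/(2*D+1) < ε) :
    (ε - 1/(2*D+1))/D ≤ (ε - 1/t)/(D-1) := by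
  have hw0 : (0:ℝ) < 2*D+1 := by linarith
  have hwpos : (0:ℝ) < 1/(2*D+1) := by positivity
  have ht0 : (0:ℝ) < t := by linarith
  have hu : 1/t ≤ 1/(2*D+1) := one_div_le_one_div_of_le hw0 ht
  rw [div_le_div_iff₀ (by linarith) (by linarith)]
  nlinarith

lemma A4b (hD : 2 ≤ D) (hε1 : 1/(2*D+1) < ε) :
    (ε - 1/(2*D+1))/D ≤ ε/D := by
  have hwpos : (0:ℝ) < 1/(2*D+1) := by positivity
  gcongr <;> linarith

lemma A2 (hD : 2 ≤ D) (hε2 : ε ≤ 1/2) : ε/D ≤ (1-ε)/D := by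
  gcongr <;> linarith

end Arith

lemma pexpl_key (hd : 2 ≤ d) {ε t : ℝ} (hε1 : 1/(2*(d:ℝ)+1) < ε) (hε2 : ε ≤ 1/2)
    (ht : 2*(d:ℝ)+1 ≤ t) (i : Dir d) (x : V d) (hx : x ∈ cube 0) :
    ∃ e : Dir d, x e.1 = (if e.2 then 1 else 0) ∧ ε/(d:ℝ) ≤ pexpl d ε (t,i) e := by
  have hx' : ∀ k, x k = 0 ∨ x k = 1 := fun k => by simpa using hx k
  have hD : (2:ℝ) ≤ (d:ℝ) := by exact_mod_cast hd
  have htpos : (0:ℝ) < t := by linarith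
  have hεpos : 0 < ε := lt_trans (by positivity) hε1
  have h0d : 0 < d := by omega
  have h1d : 1 < d := by omega
  set j0 : Fin d := ⟨0, h0d⟩ with hj0
  set j1 : Fin d := ⟨1, h1d⟩ with hj1
  have hjne : j0 ≠ j1 := by simp [hj0, hj1, Fin.ext_iff]
  rcases hbi : i.2 with _ | _
  · -- i.2 = false
    by_cases hone : ∃ k, x k = 1
    · obtain ⟨k, hk⟩ := hone
      refine ⟨(k, true), by simpa using hk, ?_⟩
      have hne : ((k, true) : Dir d) ≠ i := by
        intro h; rw [← h] at hbi; simp at hbi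
      simp only [pexpl, if_neg hne, hbi]
      simpa using A2 hD hε2
    · push_neg at hone
      have hzero : ∀ k, x k = 0 := fun k => (hx' k).resolve_right (hone k)
      by_cases hsmall : ε/(d:ℝ) ≤ 1/t
      · refine ⟨i, ?_, ?_⟩
        · rw [hbi]; simpa using hzero i.1
        · simp only [pexpl, if_pos rfl]
          simpa using hsmall
      · push_neg at hsmall
        set k : Fin d := if j0 = i.1 then j1 else j0 with hk
        have hki : k ≠ i.1 := by
          by_cases h : j0 = i.1
          · rw [hk, if_pos h, ← h]; exact hjne.symm
          · rw [hk, if_neg h]; exact h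
        refine ⟨(k, false), by simpa using hzero k, ?_⟩
        have hne : ((k, false) : Dir d) ≠ i := by
          intro h; apply hki; rw [← h]
        simp only [pexpl, if_neg hne, hbi]
        simpa using A3 hD hsmall
  · -- i.2 = true
    set k : Fin d := if j0 = i.1 then j1 else j0 with hk
    have hki : k ≠ i.1 := by
      by_cases h : j0 = i.1
      · rw [hk, if_pos h, ← h]; exact hjne.symm
      · rw [hk, if_neg h]; exact h
    rcases hx' k with hxk | hxk
    · refine ⟨(k, false), by simpa using hxk, ?_⟩
      have hne : ((k, false) : Dir d) ≠ i := by
        intro h; apply hki; rw [← h]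
      simp only [pexpl, if_neg hne, hbi]
      simp
    · refine ⟨(k, true), by simpa using hxk, ?_⟩
      have hne : ((k, true) : Dir d) ≠ i := by
        intro h; apply hki; rw [← h]
      simp only [pexpl, if_neg hne, hbi]
      simpa using A1 hD ht hε1 hε2

lemma pexpl_pos_dir (hd : 2 ≤ d) {ε t : ℝ} (hε1 : 1/(2*(d:ℝ)+1) < ε) (hε2 : ε ≤ 1/2)
    (ht : 2*(d:ℝ)+1 ≤ t) (i : Dir d) (k : Fin d) (hne : ((k, true) : Dir d) ≠ i) :
    ε/(d:ℝ) ≤ pexpl d ε (t,i) (k, true) := by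
  have hD : (2:ℝ) ≤ (d:ℝ) := by exact_mod_cast hd
  simp only [pexpl, if_neg hne]
  rcases hbi : i.2 with _ | _
  · simpa using A2 hD hε2
  · simpa using A1 hD ht hε1 hε2

lemma pexpl_min (hd : 2 ≤ d) {ε t : ℝ} (hε1 : 1/(2*(d:ℝ)+1) < ε) (hε2 : ε ≤ 1/2)
    (ht : 2*(d:ℝ)+1 ≤ t) (i e : Dir d) :
    min (1/t) ((ε - 1/(2*(d:ℝ)+1))/(d:ℝ)) ≤ pexpl d ε (t,i) e := by
  have hD : (2:ℝ) ≤ (d:ℝ) := by exact_mod_cast hd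
  by_cases he : e = i
  · subst he
    simp only [pexpl, if_pos rfl]
    exact min_le_left _ _
  · refine le_trans (min_le_right _ _) ?_
    rcases hbe : e.2 with _ | _
    · -- e.2 = false
      simp only [pexpl, if_neg he, hbe]
      rcases hbi : i.2 with _ | _
      · simpa using A4 hD ht hε1
      · simpa using le_trans (A4b hD hε1) (le_refl _)
    · simp only [pexpl, if_neg he, hbe]
      rcases hbi : i.2 with _ | _
      · simpa using le_trans (A4b hD hε1) (A2 hD hε2)
      · simpa using le_trans (A4b hD hε1) (A1 hD ht hε1 hε2)

lemma uniformDir_prob (hd : 0 < d) : IsProbabilityMeasure (uniformDir d) := by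
  constructor
  rw [uniformDir, Measure.smul_apply, Measure.coe_finset_sum]
  simp only [Finset.sum_apply, Measure.dirac_apply_of_mem (Set.mem_univ _)]
  rw [Finset.sum_const, Finset.card_univ, nsmul_eq_mul, mul_one, smul_eq_mul]
  rw [ENNReal.inv_mul_cancel]
  · simp [Fintype.card_prod]
    omega
  · exact ENNReal.natCast_ne_top _

lemma pexpl_measurable (d : ℕ) (ε : ℝ) : Measurable (pexpl d ε) := by
  apply measurable_pi_lambda
  intro e
  apply measurable_from_prod_countable_left
  intro i
  simp only [pexpl]
  split_ifs <;> fun_prop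

lemma ae_pexpl {Pr : Measure (Env d)} {ε : ℝ} (hd : 0 < d) (hPr : IsPexpl Pr ε)
    (x : V d) (S : Set (Dir d → ℝ)) (hS : MeasurableSet S)
    (h : ∀ t : ℝ, 2*(d:ℝ)+1 ≤ t → ∀ i : Dir d, pexpl d ε (t,i) ∈ S) :
    ∀ᵐ ω ∂Pr, ((ω x).1 : Dir d → ℝ) ∈ S := by
  obtain ⟨⟨hprob, hindep, hmarg⟩, μT, hμTprob, hμTsupp, _, _, hlaw⟩ := hPr
  haveI := hμTprob
  haveI : IsProbabilityMeasure (uniformDir d) := uniformDir_prob hd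
  have hg : Measurable fun ω : Env d => ((ω x).1 : Dir d → ℝ) :=
    measurable_subtype_coe.comp (measurable_pi_apply x)
  have hmap : Pr.map (fun ω => ((ω x).1 : Dir d → ℝ))
      = (μT.prod (uniformDir d)).map (pexpl d ε) := by
    rw [← hlaw]
    have h1 : Pr.map (fun ω => ((ω x).1 : Dir d → ℝ))
        = (Pr.map (fun ω => ω x)).map (fun p : ProbVec d => (p : Dir d → ℝ)) := by
      rw [Measure.map_map measurable_subtype_coe (measurable_pi_apply x)]
      rfl
    have h2 : Pr.map (fun ω => ((ω 0).1 : Dir d → ℝ))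
        = (Pr.map (fun ω => ω 0)).map (fun p : ProbVec d => (p : Dir d → ℝ)) := by
      rw [Measure.map_map measurable_subtype_coe (measurable_pi_apply 0)]
      rfl
    rw [h1, h2, hmarg x]
  rw [ae_iff]
  have hset : {ω : Env d | ¬ ((ω x).1 : Dir d → ℝ) ∈ S}
      = (fun ω : Env d => ((ω x).1 : Dir d → ℝ)) ⁻¹' Sᶜ := rfl
  rw [hset, ← Measure.map_apply hg hS.compl, hmap,
      Measure.map_apply (pexpl_measurable d ε) hS.compl]
  have hsub : pexpl d ε ⁻¹' Sᶜ ⊆ {t : ℝ | ¬ (2*(d:ℝ)+1 ≤ t)} ×ˢ (Set.univ : Set (Dir d)) := by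
    rintro ⟨t, i⟩ hti
    simp only [Set.mem_preimage, Set.mem_compl_iff] at hti
    refine ⟨fun hge => hti (h t hge i), trivial⟩
  have hzero : (μT.prod (uniformDir d)) ({t : ℝ | ¬ (2*(d:ℝ)+1 ≤ t)} ×ˢ (Set.univ : Set (Dir d))) = 0 := by
    rw [Measure.prod_prod]
    have hμ0 : μT {t : ℝ | ¬ (2*(d:ℝ)+1 ≤ t)} = 0 := by
      have hc := measure_compl (μ := μT) (s := {t : ℝ | 2*(d:ℝ)+1 ≤ t})
        measurableSet_Ici (measure_ne_top _ _)
      rw [measure_univ, hμTsupp] at hc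
      simp only [tsub_self] at hc
      exact hc
    rw [hμ0, zero_mul]
  exact le_antisymm (le_trans (measure_mono hsub) hzero.le) zero_le

lemma qmax_ae (hd : 2 ≤ d) {Pr : Measure (Env d)} {ε : ℝ} (hPr : IsPexpl Pr ε)
    (hε1 : 1/(2*(d:ℝ)+1) < ε) (hε2 : ε ≤ 1/2) :
    ∀ᵐ ω ∂Pr, ∀ x ∈ cube (0 : V d), ε/(d:ℝ) ≤ Qmax ω (cube 0) x := by
  have hcount : (cube (0:V d)).Countable := Set.to_countable _
  rw [ae_ball_iff hcount]
  intro x hx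
  set S : Set (Dir d → ℝ) :=
    ⋃ e : Dir d, {p | x + dirVec d e ∈ bdryAt x (cube 0) ∧ ε/(d:ℝ) ≤ p e} with hSdef
  have hS : MeasurableSet S := by
    apply MeasurableSet.iUnion
    intro e
    by_cases hc : x + dirVec d e ∈ bdryAt x (cube 0)
    · have heq : {p : Dir d → ℝ | x + dirVec d e ∈ bdryAt x (cube 0) ∧ ε/(d:ℝ) ≤ p e}
          = {p : Dir d → ℝ | ε/(d:ℝ) ≤ p e} := by ext p; simp [hc]
      rw [heq]
      exact measurableSet_le measurable_const (measurable_pi_apply e)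
    · have heq : {p : Dir d → ℝ | x + dirVec d e ∈ bdryAt x (cube 0) ∧ ε/(d:ℝ) ≤ p e}
          = ∅ := by ext p; simp [hc]
      rw [heq]
      exact MeasurableSet.empty
  have hae := ae_pexpl (by omega : 0 < d) hPr x S hS ?_
  · filter_upwards [hae] with ω hω
    rcases Set.mem_iUnion.mp hω with ⟨e, hc, hle⟩
    have hb : BddAbove (Set.range fun e' : Dir d =>
        if x + dirVec d e' ∈ bdryAt x (cube 0) then pmf ω x e' else 0) :=
      (Set.finite_range _).bddAbove
    have hsup := le_ciSup hb e
    rw [if_pos hc] at hsup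
    exact le_trans hle hsup
  · intro t ht i
    obtain ⟨e, hcond, hval⟩ := pexpl_key hd hε1 hε2 ht i x hx
    exact Set.mem_iUnion.mpr ⟨e, (aux_cube x hx e).mpr hcond, hval⟩

lemma qmax_moment (hd : 2 ≤ d) {Pr : Measure (Env d)} {ε : ℝ} (hPr : IsPexpl Pr ε)
    (hε1 : 1/(2*(d:ℝ)+1) < ε) (hε2 : ε ≤ 1/2)
    (γ : ℝ) (hγ : 0 < γ) (x : V d) (hx : x ∈ cube 0) :
    ∫⁻ ω, (ENNReal.ofReal (Qmax ω (cube 0) x)) ^ (-γ) ∂Pr < ⊤ := by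
  haveI hprob : IsProbabilityMeasure Pr := hPr.1.1
  have hεd : 0 < ε/(d:ℝ) := by
    have : (0:ℝ) < 1/(2*(d:ℝ)+1) := by
      have : (2:ℝ) ≤ (d:ℝ) := by exact_mod_cast hd
      positivity
    have hD : (0:ℝ) < (d:ℝ) := by
      have : (2:ℝ) ≤ (d:ℝ) := by exact_mod_cast hd
      linarith
    have hεp : 0 < ε := lt_trans this hε1
    positivity
  have hbound : ∀ᵐ ω ∂Pr, (ENNReal.ofReal (Qmax ω (cube 0) x)) ^ (-γ)
      ≤ (ENNReal.ofReal (ε/(d:ℝ))) ^ (-γ) := by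
    filter_upwards [qmax_ae hd hPr hε1 hε2] with ω hω
    rw [ENNReal.rpow_neg, ENNReal.rpow_neg]
    exact ENNReal.inv_le_inv.mpr
      (ENNReal.rpow_le_rpow (ENNReal.ofReal_le_ofReal (hω x hx)) hγ.le)
  calc ∫⁻ ω, (ENNReal.ofReal (Qmax ω (cube 0) x)) ^ (-γ) ∂Pr
      ≤ ∫⁻ _, (ENNReal.ofReal (ε/(d:ℝ))) ^ (-γ) ∂Pr := lintegral_mono_ae hbound
    _ = (ENNReal.ofReal (ε/(d:ℝ))) ^ (-γ) := by rw [lintegral_const, measure_univ, mul_one]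
    _ < ⊤ := by
        rw [ENNReal.rpow_neg]
        refine ENNReal.inv_lt_top.mpr (ENNReal.rpow_pos ?_ ?_)
        · exact ENNReal.ofReal_pos.mpr hεd
        · exact ENNReal.ofReal_ne_top

lemma pexpl_condE0 (hd : 2 ≤ d) {Pr : Measure (Env d)} {ε : ℝ} (hPr : IsPexpl Pr ε)
    (hε1 : 1/(2*(d:ℝ)+1) < ε) (hε2 : ε ≤ 1/2) : CondE0 Pr := by
  intro e
  obtain ⟨⟨hprob, hindep, hmarg⟩, μT, hμTprob, hμTsupp, _, hmom, hlaw⟩ := hPr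
  haveI := hμTprob
  haveI : IsProbabilityMeasure (uniformDir d) := uniformDir_prob (by omega)
  have hD : (2:ℝ) ≤ (d:ℝ) := by exact_mod_cast hd
  have hD0 : (0:ℝ) < (d:ℝ) := by linarith
  set η : ℝ := (1:ℝ)/(8*(d:ℝ)) with hη
  have hηpos : 0 < η := by positivity
  refine ⟨η, hηpos, ?_⟩
  set c2 : ℝ := (ε - 1/(2*(d:ℝ)+1))/(d:ℝ) with hc2
  have hc2pos : 0 < c2 := by
    have hw : (0:ℝ) < 1/(2*(d:ℝ)+1) := by positivity
    have : 0 < ε - 1/(2*(d:ℝ)+1) := by linarith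
    positivity
  have hg0 : Measurable fun ω : Env d => ((ω 0).1 : Dir d → ℝ) :=
    measurable_subtype_coe.comp (measurable_pi_apply 0)
  have hF : Measurable fun p : Dir d → ℝ => (ENNReal.ofReal (p e)) ^ (-η) :=
    (ENNReal.measurable_ofReal.comp (measurable_pi_apply e)).pow_const (-η)
  have key : ∫⁻ ω, (ENNReal.ofReal (pmf ω 0 e)) ^ (-η) ∂Pr
      = ∫⁻ ti, (ENNReal.ofReal (pexpl d ε ti e)) ^ (-η) ∂(μT.prod (uniformDir d)) := by
    have h1 : ∫⁻ ω, (ENNReal.ofReal (pmf ω 0 e)) ^ (-η) ∂Pr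
        = ∫⁻ p, (ENNReal.ofReal (p e)) ^ (-η)
            ∂(Pr.map fun ω : Env d => ((ω 0).1 : Dir d → ℝ)) :=
      (lintegral_map hF hg0).symm
    rw [h1, hlaw, lintegral_map hF (pexpl_measurable d ε)]
  rw [key]
  have haeT : ∀ᵐ ti : ℝ × Dir d ∂(μT.prod (uniformDir d)), 2*(d:ℝ)+1 ≤ ti.1 := by
    rw [ae_iff]
    have hset : {ti : ℝ × Dir d | ¬ 2*(d:ℝ)+1 ≤ ti.1}
        = {t : ℝ | ¬ (2*(d:ℝ)+1 ≤ t)} ×ˢ (Set.univ : Set (Dir d)) := by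
      ext ⟨t, i⟩; simp
    rw [hset, Measure.prod_prod]
    have hμ0 : μT {t : ℝ | ¬ (2*(d:ℝ)+1 ≤ t)} = 0 := by
      have hc := measure_compl (μ := μT) (s := {t : ℝ | 2*(d:ℝ)+1 ≤ t})
        measurableSet_Ici (measure_ne_top _ _)
      rw [measure_univ, hμTsupp] at hc
      simp only [tsub_self] at hc
      exact hc
    rw [hμ0, zero_mul]
  have hbound : ∀ᵐ ti : ℝ × Dir d ∂(μT.prod (uniformDir d)),
      (ENNReal.ofReal (pexpl d ε ti e)) ^ (-η)
        ≤ ENNReal.ofReal (ti.1 ^ η) + ENNReal.ofReal (c2 ^ (-η)) := by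
    filter_upwards [haeT] with ti hti
    have ht0 : (0:ℝ) < ti.1 := by linarith
    have hv : min (1/ti.1) c2 ≤ pexpl d ε ti e := by
      rw [hc2]
      have := pexpl_min hd hε1 hε2 hti ti.2 e
      rwa [Prod.mk.eta] at this
    have h1 : (ENNReal.ofReal (pexpl d ε ti e)) ^ (-η)
        ≤ (ENNReal.ofReal (min (1/ti.1) c2)) ^ (-η) := by
      rw [ENNReal.rpow_neg, ENNReal.rpow_neg]
      exact ENNReal.inv_le_inv.mpr
        (ENNReal.rpow_le_rpow (ENNReal.ofReal_le_ofReal hv) hηpos.le)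
    rcases min_choice (1/ti.1) c2 with hm | hm
    · rw [hm] at h1
      have h2 : (ENNReal.ofReal (1/ti.1)) ^ (-η) = ENNReal.ofReal (ti.1 ^ η) := by
        rw [ENNReal.ofReal_rpow_of_pos (by positivity)]
        congr 1
        rw [Real.rpow_neg (by positivity), one_div, Real.inv_rpow ht0.le, inv_inv]
      rw [h2] at h1
      exact h1.trans le_self_add
    · rw [hm] at h1
      rw [ENNReal.ofReal_rpow_of_pos hc2pos] at h1
      exact h1.trans le_add_self
  calc ∫⁻ ti, (ENNReal.ofReal (pexpl d ε ti e)) ^ (-η) ∂(μT.prod (uniformDir d))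
      ≤ ∫⁻ ti : ℝ × Dir d, (ENNReal.ofReal (ti.1 ^ η) + ENNReal.ofReal (c2 ^ (-η)))
          ∂(μT.prod (uniformDir d)) := lintegral_mono_ae hbound
    _ = ∫⁻ ti : ℝ × Dir d, ENNReal.ofReal (ti.1 ^ η) ∂(μT.prod (uniformDir d))
          + ENNReal.ofReal (c2 ^ (-η)) := by
        rw [lintegral_add_right _ measurable_const, lintegral_const, measure_univ, mul_one]
    _ < ⊤ := by
        have hfirst : ∫⁻ ti : ℝ × Dir d, ENNReal.ofReal (ti.1 ^ η) ∂(μT.prod (uniformDir d))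
            = ∫⁻ t, ENNReal.ofReal (t ^ η) ∂μT := by
          have hm1 : Measurable fun t : ℝ => ENNReal.ofReal (t ^ η) := by
            apply ENNReal.measurable_ofReal.comp
            fun_prop
          rw [← lintegral_map hm1 measurable_fst, Measure.map_fst_prod, measure_univ, one_smul]
        rw [hfirst]
        exact ENNReal.add_lt_top.mpr ⟨hmom, ENNReal.ofReal_lt_top⟩

/-- Corner of the unit hypercube indexed by the binary digits of `j`. -/
def corner (d j : ℕ) : V d := fun i => if Nat.testBit j (i:ℕ) then 1 else 0

lemma corner_inj {a b : ℕ} (ha : a < 2^d) (hb : b < 2^d)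
    (h : corner d a = corner d b) : a = b := by
  apply Nat.eq_of_testBit_eq
  intro i
  by_cases hi : i < d
  · have hc := congrFun h ⟨i, hi⟩
    simp only [corner] at hc
    by_cases h1 : Nat.testBit a i <;> by_cases h2 : Nat.testBit b i <;> simp_all
  · have h1 : Nat.testBit a i = false :=
      Nat.testBit_lt_two_pow (lt_of_lt_of_le ha (Nat.pow_le_pow_right (by norm_num) (by omega)))
    have h2 : Nat.testBit b i = false :=
      Nat.testBit_lt_two_pow (lt_of_lt_of_le hb (Nat.pow_le_pow_right (by norm_num) (by omega)))
    rw [h1, h2]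

lemma corner_mem_cubePts (c : ℕ) : corner d c ∈ cubePts d :=
  Finset.mem_image.mpr ⟨fun i => Nat.testBit c (i:ℕ), Finset.mem_univ _, rfl⟩

lemma cubePts_card : (cubePts d).card = 2^d := by
  rw [cubePts, Finset.card_image_of_injOn, Finset.card_univ]
  · simp [Fintype.card_fun]
  · intro s _ s' _ h
    funext i
    have hc := congrFun h i
    by_cases h1 : s i <;> by_cases h2 : s' i <;> simp_all

lemma mem_cube_exists {x0 y : V d} : y ∈ cube x0 ↔ ∃ c ∈ cubePts d, x0 + c = y := by
  constructor
  · intro hy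
    refine ⟨fun i => if y i = x0 i + 1 then 1 else 0, ?_, ?_⟩
    · exact Finset.mem_image.mpr ⟨fun i => decide (y i = x0 i + 1), Finset.mem_univ _, by
        funext i; simp⟩
    · funext i
      rcases hy i with h | h
      · have hne : ¬ (y i = x0 i + 1) := by omega
        simp [Pi.add_apply, hne, h]
      · simp [Pi.add_apply, h]
  · rintro ⟨c, hc, rfl⟩
    obtain ⟨s, -, rfl⟩ := Finset.mem_image.mp hc
    intro i
    by_cases h : s i <;> simp [Pi.add_apply, h]

lemma cubePts_mem_cube {x : V d} (hx : x ∈ cubePts d) : x ∈ cube 0 := by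
  have : (0:V d) + x = x := by rw [zero_add]
  exact mem_cube_exists.mpr ⟨x, hx, this⟩

lemma xor_mix (x y m : ℕ) : (x^^^m)^^^(y^^^m) = x^^^y := by
  apply Nat.eq_of_testBit_eq
  intro t
  simp only [Nat.testBit_xor]
  cases x.testBit t <;> cases y.testBit t <;> cases m.testBit t <;> rfl

lemma adj_sum (x : V d) {a b k : ℕ} (hab : a ^^^ b = 2^k) (hk : k < d) :
    ∑ p, |(x + corner d a) p - (x + corner d b) p| = 1 := by
  have hdiff : ∀ p : Fin d, (x + corner d a) p - (x + corner d b) p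
      = corner d a p - corner d b p := by
    intro p; simp only [Pi.add_apply]; ring
  calc ∑ p, |(x + corner d a) p - (x + corner d b) p|
      = ∑ p, |corner d a p - corner d b p| := by
        refine Finset.sum_congr rfl fun p _ => ?_
        rw [hdiff]
    _ = 1 := by
        rw [Finset.sum_eq_single ⟨k, hk⟩]
        · have hbitk : (a ^^^ b).testBit k = true := by
            rw [hab]; exact Nat.testBit_two_pow_self
          rw [Nat.testBit_xor] at hbitk
          simp only [corner]
          by_cases h1 : a.testBit k <;> by_cases h2 : b.testBit k <;> simp_all
        · intro p _ hp
          have hpk : (p:ℕ) ≠ k := by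
            intro h; exact hp (Fin.ext h)
          have hbitp : (a ^^^ b).testBit (p:ℕ) = false := by
            rw [hab]; exact Nat.testBit_two_pow_of_ne (Ne.symm hpk)
          rw [Nat.testBit_xor] at hbitp
          simp only [corner]
          by_cases h1 : a.testBit (p:ℕ) <;> by_cases h2 : b.testBit (p:ℕ) <;> simp_all
        · intro h; exact absurd (Finset.mem_univ _) h

/-- The preferred positive direction at the origin. -/
def estar (d : ℕ) (hd : 2 ≤ d) (ω : Env d) : Dir d :=
  if pmf ω 0 (⟨0, by omega⟩, true) < pmf ω 0 (⟨1, by omega⟩, true)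
  then (⟨1, by omega⟩, true) else (⟨0, by omega⟩, true)

/-- The base point of the discovered hypercube. -/
def xbase (d : ℕ) (hd : 2 ≤ d) (ω : Env d) : V d :=
  fun i => if i = (estar d hd ω).1 then -1 else 0

lemma estar_snd (hd : 2 ≤ d) (ω : Env d) : (estar d hd ω).2 = true := by
  rw [estar]; split <;> rfl

lemma estar_local (hd : 2 ≤ d) {ω ω' : Env d} (h : ω' 0 = ω 0) :
    estar d hd ω' = estar d hd ω := by
  unfold estar pmf; rw [h]

lemma estar_meas (hd : 2 ≤ d) : Measurable (estar d hd) := by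
  have h0 : Measurable fun ω : Env d => pmf ω 0 (⟨0, by omega⟩, true) :=
    (measurable_pi_apply _).comp (measurable_subtype_coe.comp (measurable_pi_apply 0))
  have h1 : Measurable fun ω : Env d => pmf ω 0 (⟨1, by omega⟩, true) :=
    (measurable_pi_apply _).comp (measurable_subtype_coe.comp (measurable_pi_apply 0))
  exact Measurable.ite (measurableSet_lt h0 h1) measurable_const measurable_const

lemma xbase_local (hd : 2 ≤ d) {ω ω' : Env d} (h : ω' 0 = ω 0) :
    xbase d hd ω' = xbase d hd ω := by
  unfold xbase
  rw [estar_local hd h]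

lemma xbase_meas (hd : 2 ≤ d) : Measurable (xbase d hd) := by
  have : xbase d hd = (fun e : Dir d => (fun i => if i = e.1 then -1 else 0 : V d))
      ∘ estar d hd := rfl
  rw [this]
  exact Measurable.of_discrete.comp (estar_meas hd)

lemma zero_mem_cube_xbase (hd : 2 ≤ d) (ω : Env d) : (0:V d) ∈ cube (xbase d hd ω) := by
  intro i
  simp only [Pi.zero_apply, xbase]
  by_cases h : i = (estar d hd ω).1 <;> simp [h]

lemma neg_xbase_mem (hd : 2 ≤ d) (ω : Env d) : -(xbase d hd ω) ∈ cubePts d := by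
  refine Finset.mem_image.mpr ⟨fun i => decide (i = (estar d hd ω).1), Finset.mem_univ _, ?_⟩
  funext i
  simp only [Pi.neg_apply, xbase]
  by_cases h : i = (estar d hd ω).1 <;> simp [h]

lemma dirVec_estar_bdry (hd : 2 ≤ d) (ω : Env d) :
    dirVec d (estar d hd ω) ∈ bdryAt 0 (cube (xbase d hd ω)) := by
  have hz : ∀ i : Fin d, dirVec d (estar d hd ω) i
      = if i = (estar d hd ω).1 then 1 else 0 := by
    intro i; simp [dirVec, estar_snd hd ω]
  have hsum : ∑ i, |dirVec d (estar d hd ω) i - (0:V d) i| = 1 := by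
    have : ∀ i : Fin d, |dirVec d (estar d hd ω) i - (0:V d) i|
        = |dirVec d (estar d hd ω) i| := by intro i; simp
    rw [Finset.sum_congr rfl fun i _ => this i]
    exact sum_abs_dirVec _
  refine ⟨⟨?_, 0, zero_mem_cube_xbase hd ω, hsum⟩, hsum⟩
  intro hmem
  have h1 := hmem (estar d hd ω).1
  rw [hz (estar d hd ω).1] at h1
  simp only [if_pos rfl, xbase] at h1
  norm_num at h1

/-- The revealed sites. -/
def mmhF (d : ℕ) (hd : 2 ≤ d) (j : ℕ) (ω : Env d) : V d :=
  if j < 2^d then xbase d hd ω + corner d (j ^^^ 2^(((estar d hd ω).1 : ℕ))) else 0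

lemma two_pow_estar_lt (hd : 2 ≤ d) (ω : Env d) : 2^(((estar d hd ω).1 : ℕ)) < 2^d :=
  Nat.pow_lt_pow_right (by norm_num) (estar d hd ω).1.isLt

lemma mmhF_zero (hd : 2 ≤ d) (ω : Env d) : mmhF d hd 0 ω = 0 := by
  rw [mmhF, if_pos (Nat.two_pow_pos d)]
  funext i
  simp only [Pi.add_apply, xbase, corner, Nat.zero_xor]
  by_cases h : i = (estar d hd ω).1
  · rw [if_pos h, if_pos, Pi.zero_apply]
    · norm_num
    · rw [h]; exact Nat.testBit_two_pow_self
  · rw [if_neg h, if_neg, Pi.zero_apply]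
    · norm_num
    · rw [Nat.testBit_two_pow_of_ne]
      · simp
      · intro hc
        exact h (Fin.ext hc.symm)

lemma mmhF_inj (hd : 2 ≤ d) (ω : Env d) {j j' : ℕ} (hj : j < 2^d) (hj' : j' < 2^d)
    (h : mmhF d hd j ω = mmhF d hd j' ω) : j = j' := by
  rw [mmhF, if_pos hj, mmhF, if_pos hj'] at h
  have hcor := add_left_cancel h
  have hm := two_pow_estar_lt hd ω
  have hxor := corner_inj (Nat.xor_lt_two_pow hj hm) (Nat.xor_lt_two_pow hj' hm) hcor
  have := congrArg (· ^^^ 2^(((estar d hd ω).1 : ℕ))) hxor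
  simpa [xor_cancel_right] using this

lemma mmhF_local (hd : 2 ≤ d) (j : ℕ) {ω ω' : Env d} (h : ω' 0 = ω 0) :
    mmhF d hd j ω' = mmhF d hd j ω := by
  unfold mmhF
  rw [estar_local hd h, xbase_local hd h]

lemma mmhF_meas (hd : 2 ≤ d) (j : ℕ) : Measurable (mmhF d hd j) := by
  by_cases hj : j < 2^d
  · have : mmhF d hd j = (fun e : Dir d =>
        ((fun i => if i = e.1 then -1 else 0 : V d) + corner d (j ^^^ 2^((e.1 : ℕ)))))
          ∘ estar d hd := by
      funext ω
      simp only [mmhF, if_pos hj, Function.comp_apply]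
      rfl
    rw [this]
    exact Measurable.of_discrete.comp (estar_meas hd)
  · have : mmhF d hd j = fun _ => (0 : V d) := by
      funext ω; simp [mmhF, hj]
    rw [this]
    exact measurable_const

lemma mmhF_adj (hd : 2 ≤ d) (ω : Env d) (i : ℕ) (hi : i + 1 < 2^d) :
    mmhF d hd (i+1) ω ∈ bdry {y | ∃ j ≤ i, mmhF d hd j ω = y} := by
  set n := i + 1 with hn
  set m := 2^(((estar d hd ω).1 : ℕ)) with hmdef
  have hn0 : n ≠ 0 := by omega
  set k := Nat.log2 n with hkdef
  have hk1 : 2^k ≤ n := Nat.log2_self_le hn0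
  have hk2 : n < 2^(k+1) := Nat.lt_log2_self
  have hkd : k < d := by
    by_contra hcon
    push_neg at hcon
    have : (2:ℕ)^d ≤ 2^k := Nat.pow_le_pow_right (by norm_num) hcon
    omega
  have htb : n.testBit k = true := by
    rw [Nat.testBit_eq_decide_div_mod_eq]
    have hdiv : n / 2^k = 1 := by
      apply Nat.div_eq_of_lt_le
      · omega
      · rw [pow_succ] at hk2; omega
    rw [hdiv]
    norm_num
  set j := n ^^^ 2^k with hjdef
  have hjb : j.testBit k = false := by
    rw [hjdef, Nat.testBit_xor, htb, Nat.testBit_two_pow_self]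
    rfl
  have hhigh : ∀ jj, k < jj → j.testBit jj = n.testBit jj := by
    intro jj hjj
    rw [hjdef, Nat.testBit_xor, Nat.testBit_two_pow_of_ne (by omega : k ≠ jj)]
    cases n.testBit jj <;> rfl
  have hjn : j < n := Nat.lt_of_testBit k hjb htb hhigh
  have hji : j ≤ i := by omega
  have hnm : n ^^^ m < 2^d := Nat.xor_lt_two_pow hi (two_pow_estar_lt hd ω)
  constructor
  · rintro ⟨j', hj', hEq⟩
    have := mmhF_inj hd ω (by omega : j' < 2^d) hi hEq
    omega
  · refine ⟨mmhF d hd j ω, ⟨j, hji, rfl⟩, ?_⟩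
    rw [mmhF, if_pos hi, mmhF, if_pos (by omega : j < 2^d)]
    apply adj_sum _ _ hkd
    rw [xor_mix, hjdef, xor_cancel_left]

lemma mmhF_cube (hd : 2 ≤ d) (ω : Env d) :
    cube (xbase d hd ω) = {y | ∃ j < 2^d, mmhF d hd j ω = y} := by
  classical
  set m := 2^(((estar d hd ω).1 : ℕ)) with hmdef
  set F : Finset (V d) := (Finset.range (2^d)).image (fun j => mmhF d hd j ω) with hF
  set CF : Finset (V d) := (cubePts d).image (fun c => xbase d hd ω + c) with hCF
  have hFsub : F ⊆ CF := by
    intro y hy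
    obtain ⟨j, hj, rfl⟩ := Finset.mem_image.mp hy
    rw [Finset.mem_range] at hj
    rw [hCF, Finset.mem_image]
    refine ⟨corner d (j ^^^ m), corner_mem_cubePts _, ?_⟩
    rw [mmhF, if_pos hj]
  have hcardF : F.card = 2^d := by
    rw [hF, Finset.card_image_of_injOn, Finset.card_range]
    intro j1 h1 j2 h2 hEq
    simp only [Finset.coe_range, Set.mem_Iio] at h1 h2
    exact mmhF_inj hd ω h1 h2 hEq
  have hcardCF : CF.card = 2^d := by
    rw [hCF, Finset.card_image_of_injOn, cubePts_card]
    intro c1 _ c2 _ hEq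
    exact add_left_cancel hEq
  have hFeq : F = CF := Finset.eq_of_subset_of_card_le hFsub (by omega)
  have hcube : cube (xbase d hd ω) = ↑CF := by
    ext y
    rw [mem_cube_exists]
    simp only [hCF, Finset.coe_image, Set.mem_image, Finset.mem_coe]
  rw [hcube, ← hFeq]
  ext y
  simp only [hF, Finset.coe_image, Set.mem_image, Finset.mem_coe, Finset.mem_range,
    Set.mem_setOf_eq, Finset.coe_range, Set.mem_Iio]

/-- The marks. -/
def mmhMark (d : ℕ) (hd : 2 ≤ d) (α : ℝ) (x : V d) (ω : Env d) : ℝ :=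
  if x = -(xbase d hd ω) then α + 1 else 0

/-- The marked Markovian hypercube used for `𝐏^expl`. -/
def mmh (d : ℕ) (hd : 2 ≤ d) (α : ℝ) (hα : 0 ≤ α) : MMH d where
  f := mmhF d hd
  mark := mmhMark d hd α
  x0 := xbase d hd
  f_zero := mmhF_zero hd
  f_meas := mmhF_meas hd
  f_local := by
    intro i ω ω' h
    have h0 := h 0 (Nat.zero_le i)
    rw [mmhF_zero hd ω] at h0
    exact mmhF_local hd (i+1) h0
  f_adj := fun i ω hi => mmhF_adj hd ω i hi
  x0_cube := fun ω => mmhF_cube hd ω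
  mark_nonneg := by
    intro x ω
    rw [mmhMark]
    split
    · linarith
    · exact le_refl 0
  mark_meas := by
    intro x
    have hset : MeasurableSet {ω : Env d | x = -(xbase d hd ω)} := by
      have : {ω : Env d | x = -(xbase d hd ω)} = (xbase d hd) ⁻¹' {-x} := by
        ext ω
        simp only [Set.mem_setOf_eq, Set.mem_preimage, Set.mem_singleton_iff]
        constructor
        · intro h; rw [h]; simp
        · intro h; rw [h]; simp
      rw [this]
      exact (xbase_meas hd) (measurableSet_singleton _)
    exact Measurable.ite hset measurable_const measurable_const
  mark_local := by
    intro x ω ω' h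
    have h0 : ω' 0 = ω 0 := h 0 (zero_mem_cube_xbase hd ω)
    rw [mmhMark, mmhMark, xbase_local hd h0]

lemma qtilde_bound (hd : 2 ≤ d) {P : Env d → V d → Measure (Traj d)}
    (hP : IsQuenched P) (ω : Env d) :
    pmf ω 0 (estar d hd ω) ≤ Qtilde P ω (cube (xbase d hd ω)) 0 0 := by
  set e := estar d hd ω with he
  set C := cube (xbase d hd ω) with hC
  set γ : ℕ → V d := fun k => if k = 0 then 0 else dirVec d e with hγ
  have hγ0 : γ 0 = 0 := if_pos rfl
  have hγ1 : γ 1 = dirVec d e := if_neg one_ne_zero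
  have hval : (P ω 0 {X | ∀ k ≤ 1, X k = γ k}).toReal = pmf ω 0 e := by
    rw [hP.2.2 ω 0 1 γ, hγ0, if_pos rfl, one_mul, Finset.prod_range_one, hγ0, hγ1]
    rw [stepProb, Finset.sum_eq_single e]
    · rw [if_pos (by rw [zero_add])]
    · intro e' _ hne
      rw [if_neg]
      intro h
      rw [zero_add] at h
      exact hne (dirVec_injective d h.symm)
    · intro h; exact absurd (Finset.mem_univ _) h
  have hsub : {X : Traj d | ∀ k ≤ 1, X k = γ k} ⊆ exitVia C 0 0 := by
    intro X hX
    refine ⟨1, ?_, ?_, ?_⟩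
    · rw [hX 1 le_rfl, hγ1, he]
      have := dirVec_estar_bdry hd ω
      rw [hC]
      exact this
    · intro m hm
      have hm0 : m = 0 := by omega
      rw [hm0, hX 0 (by omega), hγ0]
      intro hb
      exact hb.1 (zero_mem_cube_xbase hd ω)
    · intro m h1 h2; omega
  haveI := hP.1 ω 0
  have hmono := ENNReal.toReal_mono (measure_ne_top (P ω 0) (exitVia C 0 0)) (measure_mono hsub)
  show pmf ω 0 e ≤ ((P ω 0) (exitVia C 0 0)).toReal
  rw [← hval]
  exact hmono

lemma estar_pmf_ae (hd : 2 ≤ d) {Pr : Measure (Env d)} {ε : ℝ} (hPr : IsPexpl Pr ε)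
    (hε1 : 1/(2*(d:ℝ)+1) < ε) (hε2 : ε ≤ 1/2) :
    ∀ᵐ ω ∂Pr, ε/(d:ℝ) ≤ pmf ω 0 (estar d hd ω) := by
  set E0 : Dir d := (⟨0, by omega⟩, true) with hE0
  set E1 : Dir d := (⟨1, by omega⟩, true) with hE1
  set S : Set (Dir d → ℝ) := {p | ε/(d:ℝ) ≤ p E0 ∨ ε/(d:ℝ) ≤ p E1} with hS
  have hSm : MeasurableSet S :=
    (measurableSet_le measurable_const (measurable_pi_apply E0)).union
      (measurableSet_le measurable_const (measurable_pi_apply E1))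
  have hdet : ∀ t : ℝ, 2*(d:ℝ)+1 ≤ t → ∀ i : Dir d, pexpl d ε (t,i) ∈ S := by
    intro t ht i
    by_cases h : E0 = i
    · right
      apply pexpl_pos_dir hd hε1 hε2 ht
      intro hc
      rw [← h] at hc
      have := congrArg (fun e : Dir d => (e.1 : ℕ)) hc
      simp [hE0, hE1] at this
    · left
      exact pexpl_pos_dir hd hε1 hε2 ht i _ h
  filter_upwards [ae_pexpl (by omega : 0 < d) hPr 0 S hSm hdet] with ω hω
  rcases hω with h | h
  · have h' : ε/(d:ℝ) ≤ pmf ω 0 E0 := h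
    unfold estar
    split_ifs with hlt
    · exact le_trans h' (le_of_lt hlt)
    · exact h'
  · have h' : ε/(d:ℝ) ≤ pmf ω 0 E1 := h
    unfold estar
    split_ifs with hlt
    · exact h'
    · push_neg at hlt
      exact le_trans h' hlt

theorem pexpl_condK'
    (d : ℕ) (hd : 2 ≤ d)
    (P : Env d → V d → Measure (Traj d)) (hP : IsQuenched P)
    (Pr : Measure (Env d)) (ε : ℝ) (hPr : IsPexpl Pr ε)
    (hε : 1 / (2 * (d : ℝ) + 1) < ε ∧ ε ≤ 1 / 2) :
    (∀ᵐ ω ∂Pr, ∀ x ∈ cube (0 : V d), ε / d ≤ Qmax ω (cube 0) x) ∧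
    (∀ γ : ℝ, 0 < γ → ∀ x ∈ cube (0 : V d),
      ∫⁻ ω, (ENNReal.ofReal (Qmax ω (cube 0) x)) ^ (-γ) ∂Pr < ⊤) ∧
    (∀ α : ℝ, 0 < α → CondK P Pr α) ∧
    CondE0 Pr := by
  obtain ⟨hε1, hε2⟩ := hε
  haveI hprob : IsProbabilityMeasure Pr := hPr.1.1
  have hεd : 0 < ε/(d:ℝ) := by
    have hD : (2:ℝ) ≤ (d:ℝ) := by exact_mod_cast hd
    have h1 : (0:ℝ) < 1/(2*(d:ℝ)+1) := by positivity
    have h2 : 0 < ε := lt_trans h1 hε1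
    have h3 : (0:ℝ) < (d:ℝ) := by linarith
    positivity
  refine ⟨qmax_ae hd hPr hε1 hε2,
    fun γ hγ x hx => qmax_moment hd hPr hε1 hε2 γ hγ x hx, ?_,
    pexpl_condE0 hd hPr hε1 hε2⟩
  intro α hα
  set H : MMH d := mmh d hd α hα.le with hH
  refine ⟨1, one_pos, fun _ => α + 1, fun _ => by show (0:ℝ) ≤ α + 1; linarith, ?_, H, ?_, ?_⟩
  · intro x hx
    exact qmax_moment hd hPr hε1 hε2 (α+1) (by linarith) x (cubePts_mem_cube hx)
  · have hbound : ∀ᵐ ω ∂Pr, ∏ x ∈ cubePts d,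
        (ENNReal.ofReal (Qtilde P ω (cube (H.x0 ω)) 0 (H.x0 ω + x))) ^ (-(H.mark x ω))
        ≤ (ENNReal.ofReal (ε/(d:ℝ))) ^ (-(α+1)) := by
      filter_upwards [estar_pmf_ae hd hPr hε1 hε2] with ω hω
      have hx0 : H.x0 ω = xbase d hd ω := rfl
      rw [Finset.prod_eq_single (-(xbase d hd ω))]
      · have hmk : H.mark (-(xbase d hd ω)) ω = α + 1 := if_pos rfl
        have harg : H.x0 ω + -(xbase d hd ω) = 0 := by
          rw [hx0]; exact add_neg_cancel _
        rw [hmk, harg, hx0]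
        have hq : ε/(d:ℝ) ≤ Qtilde P ω (cube (xbase d hd ω)) 0 0 :=
          le_trans hω (qtilde_bound hd hP ω)
        rw [ENNReal.rpow_neg, ENNReal.rpow_neg]
        exact ENNReal.inv_le_inv.mpr
          (ENNReal.rpow_le_rpow (ENNReal.ofReal_le_ofReal hq) (by linarith))
      · intro b _ hb
        have hmk : H.mark b ω = 0 := if_neg hb
        rw [hmk, neg_zero, ENNReal.rpow_zero]
      · intro habs
        exact absurd (neg_xbase_mem hd ω) habs
    calc ∫⁻ ω, ∏ x ∈ cubePts d,
          (ENNReal.ofReal (Qtilde P ω (cube (H.x0 ω)) 0 (H.x0 ω + x))) ^ (-(H.mark x ω)) ∂Pr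
        ≤ ∫⁻ _, (ENNReal.ofReal (ε/(d:ℝ))) ^ (-(α+1)) ∂Pr := lintegral_mono_ae hbound
      _ = (ENNReal.ofReal (ε/(d:ℝ))) ^ (-(α+1)) := by
          rw [lintegral_const, measure_univ, mul_one]
      _ < ⊤ := by
          rw [ENNReal.rpow_neg]
          exact ENNReal.inv_lt_top.mpr
            (ENNReal.rpow_pos (ENNReal.ofReal_pos.mpr hεd) ENNReal.ofReal_ne_top)
  · refine Filter.Eventually.of_forall (fun ω => ?_)
    rw [Finset.sum_eq_single (-(xbase d hd ω))]
    · have hmk : H.mark (-(xbase d hd ω)) ω = α + 1 := if_pos rfl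
      rw [hmk, min_self]
    · intro b _ hb
      have hmk : H.mark b ω = 0 := if_neg hb
      rw [hmk, min_eq_right (by linarith : (0:ℝ) ≤ α + 1)]
    · intro habs
      exact absurd (neg_xbase_mem hd ω) habs

/-- For the environment `𝐏^expl` with `ε ∈ (1/(2d+1), 1/2]`: a.s.
`Q^𝔥_x ≥ ε/d` for every corner `x` of the unit hypercube; consequently all negative moments
of `Q^𝔥_x` are finite and condition `(K)_α` holds for every `α > 0`. Moreover `(E)_0` holds. -/
theorem pexpl_condK
    (d : ℕ) (hd : 2 ≤ d)
    (P : Env d → V d → Measure (Traj d)) (hP : IsQuenched P)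
    (Pr : Measure (Env d)) (ε : ℝ) (hPr : IsPexpl Pr ε)
    (hε : 1 / (2 * (d : ℝ) + 1) < ε ∧ ε ≤ 1 / 2) :
    (∀ᵐ ω ∂Pr, ∀ x ∈ cube (0 : V d), ε / d ≤ Qmax ω (cube 0) x) ∧
    (∀ γ : ℝ, 0 < γ → ∀ x ∈ cube (0 : V d),
      ∫⁻ ω, (ENNReal.ofReal (Qmax ω (cube 0) x)) ^ (-γ) ∂Pr < ⊤) ∧
    (∀ α : ℝ, 0 < α → CondK P Pr α) ∧
    CondE0 Pr := by
  exact pexpl_condK' d hd P hP Pr ε hPr hε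

end RWRE
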